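/- Let B be a Bratteli diagram with finitely many sources and let ℓ be the associated length function. For every real M ≥ 0 there exists N ∈ ℕ such that every pair (x,y) of tail-equivalent infinite paths with ℓ(x,y) ≤ M satisfies x_n = y_n for all n > N. -/

import Mathlib

/-- A Bratteli diagram: nonempty finite vertex levels `V n` (`n ≥ 0`), finite edge
sets `E n` consisting of the edges from level `n` to level `n + 1`, with source and
target maps, such that every vertex emits at least one edge. -/
structure BratteliDiagram where
  V : ℕ → Type
  E : ℕ → Type
  vFinite : ∀ n, Finite (V n)
  vNonempty : ∀ n, Nonempty (V n)
  eFinite : ∀ n, Finite (E n)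
  src : ∀ n, E n → V n
  tgt : ∀ n, E n → V (n + 1)
  src_surjective : ∀ n, Function.Surjective (src n)

namespace BratteliDiagram

variable (B : BratteliDiagram)

/-- A vertex is a source if no edge has it as its target (in particular, every
level-0 vertex is a source). -/
def IsSource : (n : ℕ) → B.V n → Prop
  | 0, _ => True
  | n + 1, v => ¬ ∃ e : B.E n, B.tgt n e = v

/-- `B` has finitely many sources: beyond some level there are no sources. -/
def FinSources : Prop :=
  ∃ N : ℕ, ∀ n : ℕ, N < n → ∀ v : B.V n, ¬ B.IsSource n v

/-- The type of finite paths in `B` starting at some source and ending at the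
vertex `w` of level `k` (including the empty path when `w` itself is a source). -/
def PathEnd : (k : ℕ) → B.V k → Type
  | 0, w => PLift (B.IsSource 0 w)
  | k + 1, w =>
      PLift (B.IsSource (k + 1) w) ⊕
        Σ e : B.E k, PLift (B.tgt k e = w) × PathEnd k (B.src k e)

/-- `c_k = Σ_{v ∈ S(B)} |P(v, V_k)|`: the total number of finite paths from the
sources of `B` to level `k`. -/
noncomputable def pathCount (k : ℕ) : ℕ :=
  Nat.card (Σ w : B.V k, B.PathEnd k w)

/-- An infinite path of `B` starting at a source: `edge n _` is the edge from
level `n` to level `n + 1` followed by the path (defined for `n ≥ start`). -/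
structure InfPath where
  start : ℕ
  edge : ∀ n, start ≤ n → B.E n
  start_isSource : B.IsSource start (B.src start (edge start le_rfl))
  compat : ∀ n (h : start ≤ n),
    B.src (n + 1) (edge (n + 1) (h.trans (Nat.le_succ n))) = B.tgt n (edge n h)

variable {B}

/-- `x` and `y` both start at level at most `m` and their edges agree from
level `m` on (i.e. `x_n = y_n` for all paper-levels `n > m`). -/
def AgreesFrom (x y : B.InfPath) (m : ℕ) : Prop :=
  ∃ (hx : x.start ≤ m) (hy : y.start ≤ m),
    ∀ n (h : m ≤ n), x.edge n (hx.trans h) = y.edge n (hy.trans h)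

/-- Tail equivalence of infinite paths. -/
def TailEquiv (x y : B.InfPath) : Prop :=
  ∃ m : ℕ, AgreesFrom x y m

/-- `k(x,y)`: the least level from which the infinite paths `x` and `y` agree. -/
noncomputable def kIdx (x y : B.InfPath) : ℕ :=
  sInf {m : ℕ | AgreesFrom x y m}

/-- The length function associated with the Bratteli diagram `B`:
`ℓ(x,y) = c_{k(x,y)}` for `x ≠ y` and `ℓ(x,x) = 0`. -/
noncomputable def len (x y : B.InfPath) : ℕ :=
  letI := Classical.dec (x = y)
  if x = y then 0 else B.pathCount (kIdx x y)

end BratteliDiagram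

namespace BratteliDiagram

variable {B : BratteliDiagram}

theorem pathEnd_finite (B : BratteliDiagram) : ∀ (k : ℕ) (w : B.V k), Finite (B.PathEnd k w) := by
  intro k
  induction k with
  | zero =>
      intro w
      show Finite (PLift (B.IsSource 0 w))
      infer_instance
  | succ k ih =>
      intro w
      haveI := B.eFinite k
      haveI : ∀ e : B.E k, Finite (B.PathEnd k (B.src k e)) := fun e => ih _
      show Finite (PLift (B.IsSource (k + 1) w) ⊕
        Σ e : B.E k, PLift (B.tgt k e = w) × B.PathEnd k (B.src k e))
      infer_instance

theorem pathEnd_nonempty (B : BratteliDiagram) : ∀ (k : ℕ) (w : B.V k), Nonempty (B.PathEnd k w) := by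
  intro k
  induction k with
  | zero => intro w; exact ⟨PLift.up trivial⟩
  | succ k ih =>
      intro w
      show Nonempty (PLift (B.IsSource (k + 1) w) ⊕
        Σ e : B.E k, PLift (B.tgt k e = w) × B.PathEnd k (B.src k e))
      by_cases h : B.IsSource (k + 1) w
      · exact ⟨Sum.inl (PLift.up h)⟩
      · obtain ⟨e, he⟩ := not_not.mp h
        obtain ⟨p⟩ := ih (B.src k e)
        exact ⟨Sum.inr ⟨e, PLift.up he, p⟩⟩

/-- The number of finite paths from sources of `B` ending at `w`. -/
noncomputable def pc (B : BratteliDiagram) (k : ℕ) (w : B.V k) : ℕ :=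
  Nat.card (B.PathEnd k w)

theorem one_le_pc (B : BratteliDiagram) (k : ℕ) (w : B.V k) : 1 ≤ B.pc k w := by
  haveI := pathEnd_finite B k w
  haveI := pathEnd_nonempty B k w
  exact Nat.one_le_iff_ne_zero.mpr Nat.card_pos.ne'

theorem natCard_sigma_aux {ι : Type} [Fintype ι] (f : ι → Type) [∀ i, Finite (f i)] :
    Nat.card (Σ i, f i) = ∑ i, Nat.card (f i) := by
  letI : ∀ i, Fintype (f i) := fun i => Fintype.ofFinite _
  simp [Nat.card_eq_fintype_card]

theorem pathCount_eq_sum (B : BratteliDiagram) (k : ℕ) [Fintype (B.V k)] :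
    B.pathCount k = ∑ w, B.pc k w := by
  haveI : ∀ w, Finite (B.PathEnd k w) := pathEnd_finite B k
  exact natCard_sigma_aux _

/-- The decomposition of paths to level `k+1` into "empty paths at sources" and
"paths through a last edge". -/
def pathSuccEquiv (B : BratteliDiagram) (k : ℕ) :
    (Σ w : B.V (k + 1), B.PathEnd (k + 1) w) ≃
      ((Σ w : B.V (k + 1), PLift (B.IsSource (k + 1) w)) ⊕
        (Σ e : B.E k, B.PathEnd k (B.src k e))) where
  toFun := fun x =>
    match x with
    | ⟨w, Sum.inl s⟩ => Sum.inl ⟨w, s⟩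
    | ⟨_, Sum.inr ⟨e, _, p⟩⟩ => Sum.inr ⟨e, p⟩
  invFun := fun x =>
    match x with
    | Sum.inl ⟨w, s⟩ => ⟨w, Sum.inl s⟩
    | Sum.inr ⟨e, p⟩ => ⟨B.tgt k e, Sum.inr ⟨e, PLift.up rfl, p⟩⟩
  left_inv := by
    rintro ⟨w, s | ⟨e, ⟨h⟩, p⟩⟩
    · rfl
    · cases h; rfl
  right_inv := by rintro (⟨w, s⟩ | ⟨e, p⟩) <;> rfl

theorem pathCount_succ_eq (B : BratteliDiagram) (k : ℕ)
    (hk : ∀ w : B.V (k + 1), ¬ B.IsSource (k + 1) w) [Fintype (B.E k)] :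
    B.pathCount (k + 1) = ∑ e, B.pc k (B.src k e) := by
  haveI : ∀ w : B.V (k + 1), IsEmpty (PLift (B.IsSource (k + 1) w)) :=
    fun w => ⟨fun s => hk w s.down⟩
  haveI : IsEmpty (Σ w : B.V (k + 1), PLift (B.IsSource (k + 1) w)) :=
    ⟨fun p => (hk p.1 p.2.down)⟩
  haveI : ∀ e : B.E k, Finite (B.PathEnd k (B.src k e)) := fun e => pathEnd_finite B k _
  have h1 : B.pathCount (k + 1) = Nat.card (Σ e : B.E k, B.PathEnd k (B.src k e)) := by
    rw [pathCount, Nat.card_congr ((pathSuccEquiv B k).trans (Equiv.emptySum _ _))]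
  rw [h1]
  exact natCard_sigma_aux _

/-- There are two distinct edges from level `j` to level `j+1` with the same target. -/
def MergeAt (B : BratteliDiagram) (j : ℕ) : Prop :=
  ∃ e₁ e₂ : B.E j, e₁ ≠ e₂ ∧ B.tgt j e₁ = B.tgt j e₂

/-- Indicator of `MergeAt`. -/
noncomputable def mergeCnt (B : BratteliDiagram) (j : ℕ) : ℕ :=
  letI := Classical.dec (MergeAt B j)
  if MergeAt B j then 1 else 0

theorem mergeCnt_eq_one {j : ℕ} (h : MergeAt B j) : B.mergeCnt j = 1 := by
  rw [mergeCnt, if_pos h]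

/-- The key step inequality: passing from level `j` to level `j+1` (no sources at
level `j+1`), the excess of the path count over the vertex count increases by at
least the merge indicator. -/
theorem step_ineq {N₀ : ℕ} (hN : ∀ n : ℕ, N₀ < n → ∀ v : B.V n, ¬ B.IsSource n v)
    {j : ℕ} (hj : N₀ ≤ j) :
    B.pathCount j + Nat.card (B.V (j + 1)) + B.mergeCnt j ≤
      B.pathCount (j + 1) + Nat.card (B.V j) := by
  classical
  letI : Fintype (B.V j) := @Fintype.ofFinite _ (B.vFinite j)
  letI : Fintype (B.V (j + 1)) := @Fintype.ofFinite _ (B.vFinite (j + 1))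
  letI : Fintype (B.E j) := @Fintype.ofFinite _ (B.eFinite j)
  have hnosrc : ∀ w : B.V (j + 1), ¬ B.IsSource (j + 1) w := hN (j + 1) (by omega)
  have hsurj : Function.Surjective (B.tgt j) := fun v => not_not.mp (hnosrc v)
  -- out-degree
  set out : B.V j → ℕ := fun w => (Finset.univ.filter fun e => B.src j e = w).card with hout
  have hout1 : ∀ w, 1 ≤ out w := by
    intro w
    obtain ⟨e, he⟩ := B.src_surjective j w
    exact Finset.card_pos.mpr ⟨e, by simp [he]⟩
  have hsum_out : ∑ w, out w = Fintype.card (B.E j) := by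
    rw [← Finset.card_univ]
    exact (Finset.card_eq_sum_card_fiberwise (fun e _ => Finset.mem_univ (B.src j e))).symm
  -- path count at level j+1
  have h1 : B.pathCount (j + 1) = ∑ e, B.pc j (B.src j e) := pathCount_succ_eq B j hnosrc
  have h2 : ∑ e, B.pc j (B.src j e) = ∑ w, out w * B.pc j w := by
    rw [← Finset.sum_fiberwise' Finset.univ (B.src j) (fun w => B.pc j w)]
    refine Finset.sum_congr rfl fun w _ => ?_
    rw [Finset.sum_const, smul_eq_mul]
  -- termwise inequality
  have h3 : ∑ w, (B.pc j w + out w) ≤ ∑ w, (out w * B.pc j w + 1) := by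
    refine Finset.sum_le_sum fun w _ => ?_
    have ha := hout1 w
    have hb := one_le_pc B j w
    nlinarith
  have hcV : Nat.card (B.V j) = Fintype.card (B.V j) := Nat.card_eq_fintype_card
  have hcV' : Nat.card (B.V (j + 1)) = Fintype.card (B.V (j + 1)) := Nat.card_eq_fintype_card
  -- |E j| ≥ |V (j+1)| + mergeCnt j
  have h4 : Fintype.card (B.V (j + 1)) + B.mergeCnt j ≤ Fintype.card (B.E j) := by
    have hle := Fintype.card_le_of_surjective _ hsurj
    rw [mergeCnt]
    split
    · rename_i hm
      obtain ⟨e₁, e₂, hne, hte⟩ := hm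
      rcases lt_or_eq_of_le hle with h | h
      · omega
      · exfalso
        have hbij : Function.Bijective (B.tgt j) :=
          (Fintype.bijective_iff_surjective_and_card _).mpr ⟨hsurj, h.symm⟩
        exact hne (hbij.injective hte)
    · omega
  have h5 : B.pathCount j = ∑ w, B.pc j w := pathCount_eq_sum B j
  have h6 : Fintype.card (B.V j) = ∑ w : B.V j, 1 := by simp
  have key : B.pathCount j + Fintype.card (B.E j) ≤
      B.pathCount (j + 1) + Fintype.card (B.V j) := by
    rw [h1, h2, h5, h6, ← Finset.sum_add_distrib, ← hsum_out, ← Finset.sum_add_distrib]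
    exact h3
  omega

theorem count_le {N₀ : ℕ} (hN : ∀ n : ℕ, N₀ < n → ∀ v : B.V n, ¬ B.IsSource n v) :
    ∀ k, N₀ ≤ k →
      (∑ j ∈ Finset.Ico N₀ k, B.mergeCnt j) + Nat.card (B.V k) ≤ B.pathCount k := by
  refine Nat.le_induction ?_ ?_
  · -- base case k = N₀
    letI : Fintype (B.V N₀) := @Fintype.ofFinite _ (B.vFinite N₀)
    rw [Finset.Ico_self, Finset.sum_empty, Nat.card_eq_fintype_card, zero_add,
      pathCount_eq_sum]
    calc Fintype.card (B.V N₀) = ∑ _w : B.V N₀, 1 := by simp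
      _ ≤ ∑ w, B.pc N₀ w := Finset.sum_le_sum fun w _ => one_le_pc B N₀ w
  · intro k hk ih
    have hstep := step_ineq (B := B) hN hk
    rw [Finset.sum_Ico_succ_top hk]
    omega

theorem start_le {N₀ : ℕ} (hN : ∀ n : ℕ, N₀ < n → ∀ v : B.V n, ¬ B.IsSource n v)
    (x : B.InfPath) : x.start ≤ N₀ := by
  by_contra h
  exact hN x.start (lt_of_not_ge h) _ x.start_isSource

theorem AgreesFrom.mono {x y : B.InfPath} {m m' : ℕ} (h : AgreesFrom x y m) (hm : m ≤ m') :
    AgreesFrom x y m' := by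
  obtain ⟨hx, hy, hag⟩ := h
  exact ⟨hx.trans hm, hy.trans hm, fun n hn => hag n (hm.trans hn)⟩

theorem mergeAt_of_kIdx {N₀ : ℕ} (hN : ∀ n : ℕ, N₀ < n → ∀ v : B.V n, ¬ B.IsSource n v)
    {x y : B.InfPath} (hxy : TailEquiv x y) {j : ℕ} (hj : N₀ ≤ j)
    (hk : kIdx x y = j + 1) : MergeAt B j := by
  have hmem : AgreesFrom x y (kIdx x y) := Nat.sInf_mem hxy
  rw [hk] at hmem
  obtain ⟨hx, hy, hag⟩ := hmem
  have hxj : x.start ≤ j := (start_le hN x).trans hj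
  have hyj : y.start ≤ j := (start_le hN y).trans hj
  have hnot : ¬ AgreesFrom x y j := by
    intro hA
    have : kIdx x y ≤ j := Nat.sInf_le hA
    omega
  have hne : x.edge j hxj ≠ y.edge j hyj := by
    intro heq
    refine hnot ⟨hxj, hyj, fun n hn => ?_⟩
    rcases Nat.eq_or_lt_of_le hn with h | h
    · cases h; exact heq
    · exact hag n (by omega)
  refine ⟨x.edge j hxj, y.edge j hyj, hne, ?_⟩
  have hcx := x.compat j hxj
  have hcy := y.compat j hyj
  have hagj : x.edge (j + 1) (hx.trans le_rfl) = y.edge (j + 1) (hy.trans le_rfl) :=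
    hag (j + 1) le_rfl
  rw [← hcx, ← hcy, hagj]

end BratteliDiagram

open BratteliDiagram in
/-- Proposition 4.5 (combinatorial content): for every `M ≥ 0` there is a level `N`
such that every pair of tail-equivalent infinite paths with `ℓ(x,y) ≤ M` agrees from
level `N` on (in particular both start at level at most `N`); that is, the ball
`B_ℓ(M)` is contained in the compact subgroupoid `G_N`, so `ℓ` is proper. -/
theorem bratteliLen_proper (B : BratteliDiagram) (hB : B.FinSources)
    (M : ℝ) (hM : 0 ≤ M) :
    ∃ N : ℕ, ∀ x y : B.InfPath, TailEquiv x y → (len x y : ℝ) ≤ M →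
      AgreesFrom x y N := by
  classical
  obtain ⟨N₀, hN⟩ := hB
  set S : Set ℕ := {j | N₀ ≤ j ∧ MergeAt B j ∧ (B.pathCount (j + 1) : ℝ) ≤ M} with hS
  have hSfin : S.Finite := by
    by_contra hinf
    have hinf' : S.Infinite := hinf
    obtain ⟨F, hFS, hFcard⟩ := hinf'.exists_subset_card_eq (⌊M⌋₊ + 1)
    have hFne : F.Nonempty := Finset.card_pos.mp (by omega)
    set k := F.max' hFne with hkdef
    have hkS : k ∈ S := hFS (F.max'_mem hFne)
    obtain ⟨hkN₀, hkM, hkle⟩ := hkS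
    -- F ⊆ Ico N₀ (k+1)
    have hFsub : F ⊆ Finset.Ico N₀ (k + 1) := by
      intro j hj
      have hjS := hFS hj
      have : j ≤ k := F.le_max' j hj
      exact Finset.mem_Ico.mpr ⟨hjS.1, by omega⟩
    have hcard_le : F.card ≤ ∑ j ∈ Finset.Ico N₀ (k + 1), B.mergeCnt j := by
      calc F.card = ∑ j ∈ F, 1 := by simp
        _ ≤ ∑ j ∈ F, B.mergeCnt j :=
            Finset.sum_le_sum fun j hj => le_of_eq (mergeCnt_eq_one (hFS hj).2.1).symm
        _ ≤ ∑ j ∈ Finset.Ico N₀ (k + 1), B.mergeCnt j :=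
            Finset.sum_le_sum_of_subset hFsub
    have hcount := count_le (B := B) hN (k + 1) (by omega)
    have hbig : (⌊M⌋₊ + 1 : ℕ) ≤ B.pathCount (k + 1) := by omega
    have : (⌊M⌋₊ + 1 : ℝ) ≤ (B.pathCount (k + 1) : ℝ) := by exact_mod_cast hbig
    have hMlt : M < (⌊M⌋₊ + 1 : ℝ) := Nat.lt_floor_add_one M
    linarith
  obtain ⟨b, hb⟩ := hSfin.bddAbove
  refine ⟨max N₀ b + 1, ?_⟩
  intro x y hxy hlen
  have hxs : x.start ≤ N₀ := start_le hN x
  have hys : y.start ≤ N₀ := start_le hN y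
  by_cases hxy' : x = y
  · subst hxy'
    exact ⟨by omega, by omega, fun n h => rfl⟩
  · have hk_mem : AgreesFrom x y (kIdx x y) := Nat.sInf_mem hxy
    rcases le_or_gt (kIdx x y) (max N₀ b + 1) with h | h
    · exact hk_mem.mono h
    · exfalso
      obtain ⟨j, hj⟩ : ∃ j, kIdx x y = j + 1 := ⟨kIdx x y - 1, by omega⟩
      have hjN₀ : N₀ ≤ j := by omega
      have hmerge : MergeAt B j := mergeAt_of_kIdx hN hxy hjN₀ hj
      have hcle : (B.pathCount (j + 1) : ℝ) ≤ M := by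
        have hlen' : len x y = B.pathCount (kIdx x y) := by
          simp only [len]
          rw [if_neg hxy']
        rw [hlen', hj] at hlen
        exact hlen
      have hjS : j ∈ S := ⟨hjN₀, hmerge, hcle⟩
      have := hb hjS
      omega
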